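/- Let y: [0,∞) → ℝ≥0 be differentiable and satisfy y'(t) ≤ (a y(t) − b) y(t) for all t ≥ 0, where a, b > 0. If y(0) ≤ b/(2a), then y is nonincreasing and y(t) ≤ y(0) e^{−(b/2) t} for all t ≥ 0. -/

import Mathlib

open Set Filter Topology

/-- Nonlinear Gronwall: if `y' ≤ (a y - b) y` with `a, b > 0` and `y(0) ≤ b/(2a)`,
then `y` is nonincreasing on `[0,∞)` and `y(t) ≤ y(0) e^{-(b/2) t}`. -/
theorem nonlinear_gronwall (y : ℝ → ℝ) (a b : ℝ) (ha : 0 < a) (hb : 0 < b)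
    (hy : Differentiable ℝ y)
    (hpos : ∀ t, 0 ≤ t → 0 ≤ y t)
    (hineq : ∀ t, 0 ≤ t → deriv y t ≤ (a * y t - b) * y t)
    (hinit : y 0 ≤ b / (2 * a)) :
    AntitoneOn y (Set.Ici 0) ∧
      ∀ t, 0 ≤ t → y t ≤ y 0 * Real.exp (-(b / 2) * t) := by
  set c : ℝ := b / (2 * a) with hc
  have hc0 : 0 < c := div_pos hb (by positivity)
  have hac : a * c = b / 2 := by
    field_simp [hc]
    rw [hc]; field_simp
  -- invariance: y t ≤ c for all t ≥ 0
  have hbound : ∀ t, 0 ≤ t → y t ≤ c := by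
    intro t₀ ht₀
    by_contra hcon
    push_neg at hcon
    set S : Set ℝ := Icc 0 t₀ ∩ y ⁻¹' (Iic c) with hS
    have hSclosed : IsClosed S :=
      isClosed_Icc.inter (isClosed_Iic.preimage hy.continuous)
    have h0S : (0:ℝ) ∈ S := ⟨⟨le_refl 0, ht₀⟩, hinit⟩
    have hSbdd : BddAbove S := BddAbove.mono inter_subset_left bddAbove_Icc
    set s : ℝ := sSup S with hsdef
    have hsS : s ∈ S := hSclosed.csSup_mem ⟨0, h0S⟩ hSbdd
    have hs0 : 0 ≤ s := hsS.1.1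
    have hst₀ : s < t₀ := by
      rcases lt_or_eq_of_le hsS.1.2 with h | h
      · exact h
      · exact absurd (h ▸ hsS.2) (not_le.2 hcon)
    have hgt : ∀ t ∈ Ioc s t₀, c < y t := by
      intro t ht
      by_contra h
      push_neg at h
      have : t ∈ S := ⟨⟨hs0.trans ht.1.le, ht.2⟩, h⟩
      exact absurd (le_csSup hSbdd this) (not_le.2 ht.1)
    have hys : y s = c := by
      refine le_antisymm hsS.2 ?_
      have htend : Tendsto y (𝓝[>] s) (𝓝 (y s)) :=
        (hy.continuous.continuousAt).continuousWithinAt.tendsto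
      refine ge_of_tendsto htend ?_
      filter_upwards [Ioc_mem_nhdsGT_of_mem ⟨le_refl s, hst₀⟩] with t ht
      exact (hgt t ht).le
    -- derivative at s is negative, contradiction with y > c just right of s
    have hdneg : deriv y s < 0 := by
      have h1 := hineq s hs0
      rw [hys] at h1
      nlinarith
    have hder : HasDerivAt y (deriv y s) s := (hy s).hasDerivAt
    have hslope : Tendsto (slope y s) (𝓝[>] s) (𝓝 (deriv y s)) :=
      (hasDerivAt_iff_tendsto_slope.1 hder).mono_left
        (nhdsWithin_mono s fun x hx => ne_of_gt hx)
    have hev : ∀ᶠ t in 𝓝[>] s, slope y s t < 0 :=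
      hslope.eventually (gt_mem_nhds hdneg)
    have hev2 : ∀ᶠ t in 𝓝[>] s, t ∈ Ioc s t₀ :=
      Ioc_mem_nhdsGT_of_mem ⟨le_refl s, hst₀⟩
    obtain ⟨t, h1, h2⟩ := (hev.and hev2).exists
    have hslopepos : 0 < slope y s t := by
      rw [slope_def_field]
      have : 0 < y t - y s := by rw [hys]; linarith [hgt t h2]
      exact div_pos this (sub_pos.2 h2.1)
    linarith
  -- derivative bound
  have hderiv_le : ∀ t, 0 ≤ t → deriv y t ≤ -(b / 2) * y t := by
    intro t ht
    have h1 := hineq t ht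
    have h2 := hbound t ht
    have h3 := hpos t ht
    have hay : a * y t ≤ b / 2 := by
      calc a * y t ≤ a * c := by nlinarith
      _ = b / 2 := hac
    nlinarith [mul_nonneg h3 (sub_nonneg.2 hay)]
  -- antitone
  have hanti : AntitoneOn y (Ici 0) := by
    apply antitoneOn_of_deriv_nonpos (convex_Ici 0) hy.continuous.continuousOn
      (hy.differentiableOn)
    intro t ht
    rw [interior_Ici] at ht
    have := hderiv_le t ht.le
    nlinarith [hpos t ht.le]
  refine ⟨hanti, ?_⟩
  -- exponential decay via g t = y t * exp (b/2 * t)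
  set g : ℝ → ℝ := fun t => y t * Real.exp (b / 2 * t) with hg
  have hgder : ∀ t, HasDerivAt g
      (deriv y t * Real.exp (b / 2 * t) + y t * (Real.exp (b / 2 * t) * (b / 2))) t := by
    intro t
    have hexp : HasDerivAt (fun t : ℝ => Real.exp (b / 2 * t))
        (Real.exp (b / 2 * t) * (b / 2)) t := by
      have := ((hasDerivAt_id t).const_mul (b / 2)).exp
      simpa using this
    exact ((hy t).hasDerivAt).mul hexp
  have hganti : AntitoneOn g (Ici 0) := by
    apply antitoneOn_of_deriv_nonpos (convex_Ici 0)
      (hy.continuous.mul (by continuity)).continuousOn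
      (fun t _ => (hgder t).differentiableAt.differentiableWithinAt)
    intro t ht
    rw [interior_Ici] at ht
    change deriv g t ≤ 0
    rw [(hgder t).deriv]
    have h1 := hderiv_le t ht.le
    have h2 := (Real.exp_pos (b / 2 * t)).le
    nlinarith [mul_le_mul_of_nonneg_right h1 h2]
  intro t ht
  have hgle : g t ≤ g 0 := hganti (self_mem_Ici) ht ht
  have hg0 : g 0 = y 0 := by simp [hg]
  have hE : Real.exp (-(b / 2) * t) = (Real.exp (b / 2 * t))⁻¹ := by
    rw [show -(b / 2) * t = -(b / 2 * t) by ring, Real.exp_neg]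
  rw [hE, ← div_eq_mul_inv, le_div_iff₀ (Real.exp_pos _)]
  rw [hg0] at hgle
  exact hgle
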